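/- For symmetric matrices A, B satisfying the block inequality diag(A, -B) ≤ 3ε [[I, -I], [-I, I]], and any positive semidefinite matrix ΛΛ', one has tr(ΛΛ'A - ΛΛ'B) ≤ 0. -/

import Mathlib

open Matrix

theorem trace_ishii_estimate {n M : ℕ}
    (Λ : Matrix (Fin n) (Fin M) ℝ) (ε : ℝ) (hε : 0 < ε)
    (A B : Matrix (Fin n) (Fin n) ℝ) (hA : A.IsSymm) (hB : B.IsSymm)
    (hblock : ((3 * ε) • Matrix.fromBlocks (1 : Matrix (Fin n) (Fin n) ℝ) (-1) (-1) 1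
        - Matrix.fromBlocks A 0 0 (-B)).PosSemidef) :
    (Λ * Λ.transpose * A).trace - (Λ * Λ.transpose * B).trace ≤ 0 := by
  have key : ∀ u : Fin n → ℝ, u ⬝ᵥ A *ᵥ u ≤ u ⬝ᵥ B *ᵥ u := by
    intro u
    have h := hblock.dotProduct_mulVec_nonneg (Sum.elim u u)
    have hz : ((3 * ε) • Matrix.fromBlocks (1 : Matrix (Fin n) (Fin n) ℝ) (-1) (-1) 1
        - Matrix.fromBlocks A 0 0 (-B)) *ᵥ (Sum.elim u u)
        = Sum.elim (-(A *ᵥ u)) (B *ᵥ u) := by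
      funext i
      cases i with
      | inl i =>
        simp [sub_mulVec, fromBlocks_mulVec, mulVec, dotProduct, smul_mulVec,
          Matrix.one_apply, mul_sub, mul_add, Finset.sum_sub_distrib,
          Finset.sum_add_distrib, mul_ite, mul_zero, mul_comm]
      | inr i =>
        simp [sub_mulVec, fromBlocks_mulVec, mulVec, dotProduct, smul_mulVec,
          Matrix.one_apply, mul_sub, mul_add, Finset.sum_sub_distrib,
          Finset.sum_add_distrib, mul_ite, mul_zero, mul_comm]
    rw [hz] at h
    have : (0:ℝ) ≤ -(u ⬝ᵥ A *ᵥ u) + u ⬝ᵥ B *ᵥ u := by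
      simpa [dotProduct, Sum.elim, Fintype.sum_sum_type, mul_add, add_mul,
        Finset.sum_add_distrib, dotProduct_neg] using h
    linarith
  have htr : (Λ * Λ.transpose * A).trace - (Λ * Λ.transpose * B).trace
      = ∑ j : Fin M, ((fun i => Λ i j) ⬝ᵥ A *ᵥ (fun i => Λ i j)
        - (fun i => Λ i j) ⬝ᵥ B *ᵥ (fun i => Λ i j)) := by
    rw [Matrix.mul_assoc Λ Λ.transpose A, Matrix.trace_mul_comm Λ (Λ.transpose * A),
        Matrix.mul_assoc Λ Λ.transpose B, Matrix.trace_mul_comm Λ (Λ.transpose * B),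
        Matrix.mul_assoc, Matrix.mul_assoc]
    simp only [Matrix.trace, Matrix.diag, Matrix.mul_apply, dotProduct, mulVec,
      Matrix.transpose_apply, Finset.sum_sub_distrib]
  rw [htr]
  apply Finset.sum_nonpos
  intro j _
  have := key (fun i => Λ i j)
  linarith
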